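/- arXiv:1902.00161 — 3 statements merged into one kernel-verified Lean document; each statement's English description precedes it below -/
import Mathlib

section
/- If the censoring mechanism factors out of the density (i.e., p_θ(t,d,a) = L(θ; t,d,a)·c(t,d) with c not depending on θ or on permutations applied to a, and L(θ; t,d,a_σ) well-defined for all σ), then the ratio q(x)/m(x) of the predictive density to the marginal likelihood is invariant under permutations of the treatment assignments wherever m(x) > 0, and hence the permutation tests based on T(x) = q(x) and T(x) = m(x) coincide on {x : q(x) > 0}. -/
open MeasureTheory Finset

noncomputable section

/-- Sample space of late-stage trial data `x = (t, d, a)`. -/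
abbrev SampleSpace (n : ℕ) := ((Fin n → ℝ) × (Fin n → Bool)) × (Fin n → Bool)

/-- Permute the treatment-arm labels `a` of a data point `x = ((t,d),a)`. -/
def permute {n : ℕ} (σ : Equiv.Perm (Fin n)) (x : SampleSpace n) : SampleSpace n :=
  (x.1, x.2 ∘ σ)

/-- Sorted values `T⁽¹⁾(x) ≤ ⋯ ≤ T^(n!)(x)` of the statistic over all permutations. -/
def sortedVals {n : ℕ} (T : SampleSpace n → ℝ) (x : SampleSpace n) : List ℝ :=
  ((Finset.univ : Finset (Equiv.Perm (Fin n))).val.map (fun σ => T (permute σ x))).sort (· ≤ ·)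

/-- Critical value `T^(k_α)(x)` with `k_α = n! − ⌊α n!⌋`. -/
def Tcrit {n : ℕ} (α : ℝ) (T : SampleSpace n → ℝ) (x : SampleSpace n) : ℝ :=
  (sortedVals T x).getD (Nat.factorial n - Nat.floor (α * (Nat.factorial n : ℝ)) - 1) 0

/-- `M⁺(x)`: number of permuted values strictly above the critical value. -/
def Mplus {n : ℕ} (α : ℝ) (T : SampleSpace n → ℝ) (x : SampleSpace n) : ℕ :=
  (Finset.univ.filter (fun σ : Equiv.Perm (Fin n) => T (permute σ x) > Tcrit α T x)).card

/-- `M⁰(x)`: number of permuted values equal to the critical value. -/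
def Mzero {n : ℕ} (α : ℝ) (T : SampleSpace n → ℝ) (x : SampleSpace n) : ℕ :=
  (Finset.univ.filter (fun σ : Equiv.Perm (Fin n) => T (permute σ x) = Tcrit α T x)).card

/-- The randomized α-level permutation test based on the statistic `T`. -/
def permTest {n : ℕ} (α : ℝ) (T : SampleSpace n → ℝ) (x : SampleSpace n) : ℝ :=
  if T x > Tcrit α T x then 1
  else if T x < Tcrit α T x then 0
  else (α * (Nat.factorial n : ℝ) - (Mplus α T x : ℝ)) / (Mzero α T x : ℝ)

lemma sort_smul (k : ℝ) (hk : 0 < k) (s : Multiset ℝ) :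
    (s.map (fun y => k * y)).sort (· ≤ ·) = (s.sort (· ≤ ·)).map (fun y => k * y) := by
  rw [← Multiset.map_sort (r := (· ≤ ·)) (r' := (· ≤ ·))]
  intro a _ b _
  exact (mul_le_mul_iff_right₀ hk).symm

lemma permute_one {n : ℕ} (x : SampleSpace n) : permute 1 x = x := by
  simp only [permute]
  exact congrArg _ rfl

lemma sortedVals_smul {n : ℕ} (k : ℝ) (hk : 0 < k) (T T' : SampleSpace n → ℝ)
    (x : SampleSpace n) (h : ∀ σ, T' (permute σ x) = k * T (permute σ x)) :
    sortedVals T' x = (sortedVals T x).map (fun y => k * y) := by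
  unfold sortedVals
  rw [← sort_smul k hk, Multiset.map_map]
  congr 1
  exact Multiset.map_congr rfl (fun σ _ => h σ)

lemma length_sortedVals {n : ℕ} (T : SampleSpace n → ℝ) (x : SampleSpace n) :
    (sortedVals T x).length = Nat.factorial n := by
  unfold sortedVals
  rw [Multiset.length_sort, Multiset.card_map]
  simp [Fintype.card_perm]

lemma Tcrit_smul {n : ℕ} (α k : ℝ) (hk : 0 < k) (T T' : SampleSpace n → ℝ)
    (x : SampleSpace n) (h : ∀ σ, T' (permute σ x) = k * T (permute σ x)) :
    Tcrit α T' x = k * Tcrit α T x := by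
  unfold Tcrit
  rw [sortedVals_smul k hk T T' x h]
  set i := Nat.factorial n - Nat.floor (α * (Nat.factorial n : ℝ)) - 1
  have hi : i < (sortedVals T x).length := by
    rw [length_sortedVals]
    have : 0 < Nat.factorial n := Nat.factorial_pos n
    omega
  have hi' : i < ((sortedVals T x).map (fun y => k * y)).length := by
    simpa using hi
  rw [List.getD_eq_getElem (hn := hi'), List.getD_eq_getElem (hn := hi), List.getElem_map]

lemma permTest_smul {n : ℕ} (α k : ℝ) (hk : 0 < k) (T T' : SampleSpace n → ℝ)
    (x : SampleSpace n) (h : ∀ σ, T' (permute σ x) = k * T (permute σ x)) :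
    permTest α T' x = permTest α T x := by
  have hT : Tcrit α T' x = k * Tcrit α T x := Tcrit_smul α k hk T T' x h
  have hx : T' x = k * T x := by simpa [permute_one] using h 1
  have hMp : Mplus α T' x = Mplus α T x := by
    unfold Mplus
    congr 1
    ext σ
    simp only [Finset.mem_filter, Finset.mem_univ, true_and, h σ, hT, gt_iff_lt]
    exact mul_lt_mul_iff_right₀ hk
  have hMz : Mzero α T' x = Mzero α T x := by
    unfold Mzero
    congr 1
    ext σ
    simp only [Finset.mem_filter, Finset.mem_univ, true_and, h σ, hT]
    exact mul_right_injective₀ (ne_of_gt hk) |>.eq_iff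
  unfold permTest
  rw [hMp, hMz, hx, hT]
  rcases lt_trichotomy (T x) (Tcrit α T x) with hlt | heq | hgt
  · rw [if_neg (by simpa using not_lt.2 (le_of_lt ((mul_lt_mul_iff_right₀ hk).2 hlt))),
      if_pos ((mul_lt_mul_iff_right₀ hk).2 hlt), if_neg (not_lt.2 (le_of_lt hlt)),
      if_pos hlt]
  · simp [heq]
  · rw [if_pos ((mul_lt_mul_iff_right₀ hk).2 hgt), if_pos hgt]

/-- If the censoring mechanism factors out of the density, `p_θ(t,d,a) = L(θ;t,d,a)·c(t,d)`,
then the ratio `q(x)/m(x)` of the predictive density to the marginal likelihood is invariant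
under permutations of the treatment assignments wherever `m > 0`, and the permutation tests
based on `T = q` and `T = m` coincide on `{x : q(x) > 0}`. -/
theorem ratio_invariance_and_tests_coincide
    {n : ℕ} (α : ℝ)
    {Θ : Type*} [MeasurableSpace Θ] (π : Measure Θ) (Θ1 : Set Θ)
    (L : Θ → SampleSpace n → ℝ)
    (c : ((Fin n → ℝ) × (Fin n → Bool)) → ℝ) (hc : ∀ td, 0 < c td)
    (PH1 : ℝ) (hPH1 : 0 < PH1)
    (p : Θ → SampleSpace n → ℝ) (hp : ∀ θ x, p θ x = L θ x * c x.1)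
    (m q : SampleSpace n → ℝ)
    (hm : ∀ x, m x = ∫ θ in Θ1, L θ x ∂π)
    (hq : ∀ x, q x = (∫ θ in Θ1, p θ x ∂π) / PH1)
    (hInt : ∀ x, IntegrableOn (fun θ => L θ x) Θ1 π) :
    (∀ (σ : Equiv.Perm (Fin n)) (x : SampleSpace n), 0 < m x → 0 < m (permute σ x) →
        q x / m x = q (permute σ x) / m (permute σ x))
      ∧ (∀ x, 0 < q x → permTest α q x = permTest α m x) := by
  have key : ∀ y : SampleSpace n, q y = (c y.1 / PH1) * m y := by
    intro y
    rw [hq, hm]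
    have : (∫ θ in Θ1, p θ y ∂π) = (∫ θ in Θ1, L θ y ∂π) * c y.1 := by
      simp_rw [hp]
      exact integral_mul_const _ _
    rw [this]
    ring
  constructor
  · intro σ x hmx hmσx
    have h1 : (permute σ x).1 = x.1 := rfl
    rw [key, key, h1, mul_div_assoc, mul_div_assoc,
      div_self (ne_of_gt hmx), div_self (ne_of_gt hmσx)]
  · intro x _
    apply permTest_smul α (c x.1 / PH1) (div_pos (hc x.1) hPH1)
    intro σ
    rw [key]
    rfl
end
end

section
/- If the test statistic T is injective on the permutation orbit of x (i.e., T(t,d,a_σ₁) = T(t,d,a_σ₂) implies a_{σ₁} = a_{σ₂}), then for every x, the number of indices j with T^(j)(x) = T^(k_α)(x) equals n!/C(n, Σᵢ aᵢ), and the number with T^(j)(x) ≥ T^(k_α)(x) is at least α·n!. -/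
open MeasureTheory Finset

noncomputable section

section Aux
open Finset

theorem aux_stab_card {n : ℕ} (c : Fin n → Bool) :
    (Finset.univ.filter fun ρ : Equiv.Perm (Fin n) => c ∘ ρ = c).card
      = (Finset.univ.filter fun i => c i = true).card.factorial *
        (n - (Finset.univ.filter fun i => c i = true).card).factorial := by
  classical
  have e : {ρ : Equiv.Perm (Fin n) // c ∘ ρ = c} ≃
      Equiv.Perm {i // c i = true} × Equiv.Perm {i // ¬ (c i = true)} :=
    { toFun := fun ρ =>
        (ρ.1.subtypePerm (fun i => by
            have := congrFun ρ.2 i; simp only [Function.comp_apply] at this; rw [this]),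
         ρ.1.subtypePerm (fun i => by
            have := congrFun ρ.2 i; simp only [Function.comp_apply] at this; rw [this]))
      invFun := fun pr => ⟨Equiv.Perm.subtypeCongr pr.1 pr.2, by
        funext i
        by_cases h : c i = true
        · rw [Function.comp_apply, Equiv.Perm.subtypeCongr.left_apply (p := fun j => c j = true) pr.1 pr.2 h, h]
          exact (pr.1 ⟨i, h⟩).2
        · rw [Function.comp_apply, Equiv.Perm.subtypeCongr.right_apply (p := fun j => c j = true) pr.1 pr.2 h]
          have := (pr.2 ⟨i, h⟩).2
          simp only [Bool.not_eq_true] at this h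
          rw [this, h]⟩
      left_inv := fun ρ => Subtype.ext (by
        apply Equiv.ext; intro i
        by_cases h : c i = true
        · exact Equiv.Perm.subtypeCongr.left_apply (p := fun j => c j = true) _ _ h
        · exact Equiv.Perm.subtypeCongr.right_apply (p := fun j => c j = true) _ _ h)
      right_inv := fun pr => by
        refine Prod.ext ?_ ?_
        · ext ⟨i, hi⟩
          simp only [Equiv.Perm.subtypePerm_apply]
          exact congrArg _ (Equiv.Perm.subtypeCongr.left_apply (p := fun j => c j = true) pr.1 pr.2 hi)
        · ext ⟨i, hi⟩
          simp only [Equiv.Perm.subtypePerm_apply]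
          exact congrArg _ (Equiv.Perm.subtypeCongr.right_apply (p := fun j => c j = true) pr.1 pr.2 hi) }
  rw [← Fintype.card_subtype, Fintype.card_congr e, Fintype.card_prod,
    Fintype.card_perm, Fintype.card_perm, Fintype.card_subtype_compl,
    Fintype.card_subtype, Fintype.card_fin]

end Aux

/-- If the statistic `T` is injective on the permutation orbit of `x`, then the number of
permutations attaining the critical value `T^(k_α)(x)` equals `n!/C(n, Σᵢ aᵢ)`, and the
number of permuted values at least the critical value is at least `α·n!`. -/
theorem injective_statistic_counts
    {n : ℕ} (α : ℝ) (hα : α ∈ Set.Ioo (0:ℝ) 1)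
    (T : SampleSpace n → ℝ) (x : SampleSpace n)
    (hinj : ∀ σ₁ σ₂ : Equiv.Perm (Fin n),
      T (permute σ₁ x) = T (permute σ₂ x) → x.2 ∘ σ₁ = x.2 ∘ σ₂) :
    (Finset.univ.filter fun σ : Equiv.Perm (Fin n) => T (permute σ x) = Tcrit α T x).card
        = Nat.factorial n / n.choose (Finset.univ.filter fun i => x.2 i = true).card
      ∧ α * (Nat.factorial n : ℝ) ≤
        ((Finset.univ.filter fun σ : Equiv.Perm (Fin n) =>
          Tcrit α T x ≤ T (permute σ x)).card : ℝ) := by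
  obtain ⟨hα0, hα1⟩ := hα
  set N := Nat.factorial n with hN
  have hNpos : 0 < N := Nat.factorial_pos n
  set L := sortedVals T x with hL
  have hlen : L.length = N := by
    rw [hL, sortedVals, Multiset.length_sort, Multiset.card_map]
    simp [hN, Fintype.card_perm]
  have hfloor : Nat.floor (α * N) < N := by
    apply Nat.floor_lt (by positivity) |>.mpr
    calc α * N < 1 * N := by
          apply mul_lt_mul_of_pos_right hα1 (by exact_mod_cast hNpos)
      _ = N := one_mul _
  set f := Nat.floor (α * N) with hf
  set idx := N - f - 1 with hidx
  have hidxlt : idx < N := by omega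
  have hidxL : idx < L.length := by omega
  have hTc : Tcrit α T x = L.get ⟨idx, hidxL⟩ := by
    rw [Tcrit, List.getD_eq_getElem _ _ (by rw [hlen]; exact hidxlt)]
    rfl
  have hsorted : L.Pairwise (· ≤ ·) := Multiset.pairwise_sort _ _
  -- the second claim
  have hmem_drop : ∀ y ∈ L.drop idx, Tcrit α T x ≤ y := by
    intro y hy
    obtain ⟨j, hj, rfl⟩ := List.mem_iff_getElem.mp hy
    rw [List.getElem_drop]
    rw [hTc]
    exact hsorted.rel_get_of_le (a := ⟨idx, hidxL⟩)
      (b := ⟨idx + j, by have := hj; simp only [List.length_drop] at this; omega⟩)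
      (Fin.mk_le_mk.mpr (Nat.le_add_right _ _))
  have hcount : (Finset.univ.filter fun σ : Equiv.Perm (Fin n) =>
      Tcrit α T x ≤ T (permute σ x)).card = L.countP (fun y => decide (Tcrit α T x ≤ y)) := by
    have h1 : Multiset.countP (fun y => Tcrit α T x ≤ y)
        ((Finset.univ : Finset (Equiv.Perm (Fin n))).val.map fun σ => T (permute σ x))
        = L.countP (fun y => decide (Tcrit α T x ≤ y)) := by
      conv_lhs => rw [← Multiset.sort_eq
        ((Finset.univ : Finset (Equiv.Perm (Fin n))).val.map fun σ => T (permute σ x)) (· ≤ ·)]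
      exact Multiset.coe_countP (p := fun y => Tcrit α T x ≤ y) L
    rw [← h1, Multiset.countP_map, Finset.card, Finset.filter_val,
      ← Multiset.countP_eq_card_filter]
  have hcount_ge : f + 1 ≤ L.countP (fun y => decide (Tcrit α T x ≤ y)) := by
    have h1 : (L.drop idx).countP (fun y => decide (Tcrit α T x ≤ y)) = (L.drop idx).length :=
      List.countP_eq_length.mpr (fun y hy => by simpa using hmem_drop y hy)
    have h2 : L.countP (fun y => decide (Tcrit α T x ≤ y))
        = (L.take idx).countP (fun y => decide (Tcrit α T x ≤ y)) + (L.drop idx).countP (fun y => decide (Tcrit α T x ≤ y)) := by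
      conv_lhs => rw [← List.take_append_drop idx L, List.countP_append]
    rw [h2, h1, List.length_drop, hlen]
    omega
  have claim2 : α * (N : ℝ) ≤
      ((Finset.univ.filter fun σ : Equiv.Perm (Fin n) =>
        Tcrit α T x ≤ T (permute σ x)).card : ℝ) := by
    have hlt : α * (N : ℝ) < (f : ℝ) + 1 := Nat.lt_floor_add_one _
    have : (f + 1 : ℕ) ≤ (Finset.univ.filter fun σ : Equiv.Perm (Fin n) =>
        Tcrit α T x ≤ T (permute σ x)).card := by rw [hcount]; exact hcount_ge
    have := (Nat.cast_le (α := ℝ)).mpr this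
    push_cast at this
    linarith
  refine ⟨?_, claim2⟩
  -- first claim
  have hmemL : Tcrit α T x ∈ L := by rw [hTc]; exact L.get_mem _
  have hmemM : Tcrit α T x ∈
      ((Finset.univ : Finset (Equiv.Perm (Fin n))).val.map (fun σ => T (permute σ x))) := by
    rw [← Multiset.mem_sort (r := (· ≤ ·))]; exact hmemL
  obtain ⟨σ₀, _, hσ₀⟩ := Multiset.mem_map.mp hmemM
  set c : Fin n → Bool := x.2 ∘ σ₀ with hc
  have hset : (Finset.univ.filter fun σ : Equiv.Perm (Fin n) => T (permute σ x) = Tcrit α T x)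
      = Finset.univ.filter fun σ : Equiv.Perm (Fin n) => x.2 ∘ σ = x.2 ∘ σ₀ := by
    ext σ
    simp only [Finset.mem_filter, Finset.mem_univ, true_and]
    constructor
    · intro h; exact hinj σ σ₀ (h.trans hσ₀.symm)
    · intro h
      have : permute σ x = permute σ₀ x := by
        rw [permute, permute, h]
      rw [this, hσ₀]
  have hbij : (Finset.univ.filter fun σ : Equiv.Perm (Fin n) => x.2 ∘ σ = x.2 ∘ σ₀).card
      = (Finset.univ.filter fun ρ : Equiv.Perm (Fin n) => c ∘ ρ = c).card := by
    refine (Finset.card_equiv (Equiv.mulLeft σ₀) fun ρ => ?_).symm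
    simp only [Finset.mem_filter, Finset.mem_univ, true_and, Equiv.coe_mulLeft]
    constructor
    · intro h; funext i
      simpa [hc, Equiv.Perm.mul_apply] using congrFun h i
    · intro h; funext i
      simpa [hc, Equiv.Perm.mul_apply] using congrFun h i
  have hk : (Finset.univ.filter fun i => c i = true).card
      = (Finset.univ.filter fun i => x.2 i = true).card := by
    rw [← Fintype.card_subtype, ← Fintype.card_subtype]
    exact Fintype.card_congr (Equiv.subtypeEquiv σ₀ (fun i => Iff.rfl))
  set k := (Finset.univ.filter fun i => x.2 i = true).card with hkk
  have hkn : k ≤ n := by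
    calc k ≤ (Finset.univ : Finset (Fin n)).card := Finset.card_filter_le _ _
      _ = n := by simp
  have hfact : N / n.choose k = k.factorial * (n - k).factorial := by
    have := Nat.choose_mul_factorial_mul_factorial hkn
    rw [hN, ← this, mul_assoc, Nat.mul_div_cancel_left _ (Nat.choose_pos hkn)]
  rw [hset, hbij, aux_stab_card c, hk, hfact]
end
end

section
/- If q(x) > 0 and q(x)/m(x) is invariant under permutations of the treatment labels, then the orbit-conditional probability of the boundary event satisfies Σ_σ 1{m(t,d,a_σ)=m^(k_α)(x)} q(t,d,a_σ) / Σ_σ q(t,d,a_σ) ≤ #{j : m^(j)(x) = m^(k_α)(x)} / #{j : m^(j)(x) ≥ m^(k_α)(x)}. -/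
open MeasureTheory Finset

noncomputable section

/-- If `q(x) > 0` and the ratio `q/m` is invariant under permutations of the treatment labels,
then the orbit-conditional probability of the boundary event is bounded by the ratio of the
count of permuted values equal to the critical value `m^(k_α)(x)` to the count of permuted
values at least the critical value. -/
theorem orbit_boundary_bound
    {n : ℕ} (α : ℝ) (hα : α ∈ Set.Ioo (0:ℝ) 1)
    (m q : SampleSpace n → ℝ) (x : SampleSpace n)
    (hqx : 0 < q x)
    (hm0 : ∀ σ : Equiv.Perm (Fin n), 0 ≤ m (permute σ x))
    (hqm : ∀ σ : Equiv.Perm (Fin n), 0 < q (permute σ x) → 0 < m (permute σ x))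
    (hratio : ∀ σ : Equiv.Perm (Fin n),
      q (permute σ x) / m (permute σ x) = q x / m x) :
    (∑ σ : Equiv.Perm (Fin n), if m (permute σ x) = Tcrit α m x then q (permute σ x) else 0)
        / (∑ σ : Equiv.Perm (Fin n), q (permute σ x))
      ≤ ((Finset.univ.filter fun σ : Equiv.Perm (Fin n) =>
            m (permute σ x) = Tcrit α m x).card : ℝ)
        / ((Finset.univ.filter fun σ : Equiv.Perm (Fin n) =>
            Tcrit α m x ≤ m (permute σ x)).card : ℝ) := by
  obtain ⟨hα0, hα1⟩ := hα
  have hid : permute (1 : Equiv.Perm (Fin n)) x = x := by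
    simp [permute]
  have hmx : 0 < m x := by
    have h := hqm 1 (by rwa [hid]); rwa [hid] at h
  have hcpos : 0 < q x / m x := div_pos hqx hmx
  have hmpos : ∀ σ : Equiv.Perm (Fin n), 0 < m (permute σ x) := by
    intro σ
    rcases (hm0 σ).lt_or_eq with h | h
    · exact h
    · exfalso
      have h2 := hratio σ
      rw [← h, div_zero] at h2
      exact absurd h2.symm (ne_of_gt hcpos)
  have hq : ∀ σ : Equiv.Perm (Fin n),
      q (permute σ x) = (q x / m x) * m (permute σ x) := by
    intro σ
    exact (div_eq_iff (ne_of_gt (hmpos σ))).mp (hratio σ)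
  have hlen : (sortedVals m x).length = Nat.factorial n := by
    simp [sortedVals, Fintype.card_perm]
  have hidx : Nat.factorial n - Nat.floor (α * (Nat.factorial n : ℝ)) - 1
      < (sortedVals m x).length := by
    rw [hlen]
    have := Nat.factorial_pos n
    omega
  have hmem : Tcrit α m x ∈ sortedVals m x := by
    rw [Tcrit, List.getD_eq_getElem _ _ hidx]
    exact List.getElem_mem _
  obtain ⟨σ₀, hσ₀⟩ : ∃ σ : Equiv.Perm (Fin n), m (permute σ x) = Tcrit α m x := by
    rw [sortedVals, Multiset.mem_sort, Multiset.mem_map] at hmem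
    obtain ⟨σ, _, h⟩ := hmem
    exact ⟨σ, h⟩
  have hcrit : 0 < Tcrit α m x := hσ₀ ▸ hmpos σ₀
  set M0 := (Finset.univ.filter fun σ : Equiv.Perm (Fin n) =>
      m (permute σ x) = Tcrit α m x) with hM0
  set Mg := (Finset.univ.filter fun σ : Equiv.Perm (Fin n) =>
      Tcrit α m x ≤ m (permute σ x)) with hMg
  have hMgpos : (0:ℝ) < Mg.card := by
    have : σ₀ ∈ Mg := Finset.mem_filter.mpr ⟨Finset.mem_univ _, le_of_eq hσ₀.symm⟩
    exact_mod_cast Finset.card_pos.mpr ⟨σ₀, this⟩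
  have hnum : (∑ σ : Equiv.Perm (Fin n),
      if m (permute σ x) = Tcrit α m x then q (permute σ x) else 0)
      = (M0.card : ℝ) * ((q x / m x) * Tcrit α m x) := by
    rw [← Finset.sum_filter, ← hM0]
    rw [Finset.sum_congr rfl (fun σ hσ => ?_), Finset.sum_const, nsmul_eq_mul]
    rw [hq σ, (Finset.mem_filter.mp hσ).2]
  have hden : (∑ σ : Equiv.Perm (Fin n), q (permute σ x))
      = (q x / m x) * ∑ σ : Equiv.Perm (Fin n), m (permute σ x) := by
    rw [Finset.mul_sum]
    exact Finset.sum_congr rfl fun σ _ => hq σ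
  have hsum_ge : (Mg.card : ℝ) * Tcrit α m x
      ≤ ∑ σ : Equiv.Perm (Fin n), m (permute σ x) := by
    calc (Mg.card : ℝ) * Tcrit α m x = ∑ _σ ∈ Mg, Tcrit α m x := by
          rw [Finset.sum_const, nsmul_eq_mul]
      _ ≤ ∑ σ ∈ Mg, m (permute σ x) :=
          Finset.sum_le_sum fun σ hσ => (Finset.mem_filter.mp hσ).2
      _ ≤ ∑ σ : Equiv.Perm (Fin n), m (permute σ x) :=
          Finset.sum_le_sum_of_subset_of_nonneg (Finset.subset_univ _)
            (fun σ _ _ => hm0 σ)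
  have hSpos : (0:ℝ) < ∑ σ : Equiv.Perm (Fin n), m (permute σ x) :=
    Finset.sum_pos (fun σ _ => hmpos σ) Finset.univ_nonempty
  rw [hnum, hden]
  rw [div_le_div_iff₀ (by positivity) hMgpos]
  have hM0nn : (0:ℝ) ≤ M0.card := Nat.cast_nonneg _
  nlinarith [mul_le_mul_of_nonneg_left hsum_ge (mul_nonneg hM0nn hcpos.le)]
end
end
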